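/- For all natural numbers n ≥ 2 and r with 1 ≤ r ≤ n−1, the quantity Q := log(1 − r/(n+1)) + H_n − H_{n−r} satisfies 0 ≤ Q ≤ 1/(n−r), where H_m := ∑_{k=1}^{m} 1/k is the m-th harmonic number (H_0 := 0). -/

import Mathlib

/-- `harmonicR m = H_m = ∑_{k=1}^m 1/k`, with `H_0 = 0`. -/
noncomputable def harmonicR (m : ℕ) : ℝ := ∑ k ∈ Finset.range m, (1 : ℝ) / (k + 1)

lemma log_succ_sub_le (x : ℝ) (hx : 0 < x) :
    Real.log (x + 1) - Real.log x ≤ 1 / x := by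
  rw [← Real.log_div (by positivity) hx.ne']
  have h := Real.log_le_sub_one_of_pos (show (0:ℝ) < (x+1)/x by positivity)
  have e : (x+1)/x - 1 = 1/x := by field_simp; ring
  linarith

lemma le_log_succ_sub (x : ℝ) (hx : 0 < x) :
    1 / (x + 1) ≤ Real.log (x + 1) - Real.log x := by
  have h := Real.log_le_sub_one_of_pos (show (0:ℝ) < x/(x+1) by positivity)
  rw [Real.log_div hx.ne' (by positivity)] at h
  have e : x/(x+1) - 1 = -(1/(x+1)) := by field_simp; ring
  linarith

lemma key (m : ℕ) (hm : 1 ≤ m) : ∀ n, m ≤ n →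
    (0 ≤ Real.log ((m:ℝ)+1) - Real.log ((n:ℝ)+1) + harmonicR n - harmonicR m ∧
     Real.log ((m:ℝ)+1) - Real.log ((n:ℝ)+1) + harmonicR n - harmonicR m
       ≤ 1/(m:ℝ) - 1/((n:ℝ)+1)) := by
  intro n hn
  induction n, hn using Nat.le_induction with
  | base =>
    have hm' : (1:ℝ) ≤ (m:ℝ) := by exact_mod_cast hm
    constructor
    · simp
    · have : 1/((m:ℝ)+1) ≤ 1/(m:ℝ) := by
        apply one_div_le_one_div_of_le <;> linarith
      simp only [sub_self, zero_add]
      linarith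
  | succ n hn ih =>
    have hn1 : (0:ℝ) < (n:ℝ) + 1 := by positivity
    have hH : harmonicR (n+1) = harmonicR n + 1/((n:ℝ)+1) := by
      simp [harmonicR, Finset.sum_range_succ]
    have hcast : ((n+1 : ℕ):ℝ) + 1 = ((n:ℝ)+1) + 1 := by push_cast; ring
    have h1 := log_succ_sub_le ((n:ℝ)+1) hn1
    have h2 := le_log_succ_sub ((n:ℝ)+1) hn1
    obtain ⟨l, u⟩ := ih
    constructor
    · rw [hH, hcast]; linarith
    · rw [hH, hcast]; linarith

/-- The gap `Q = log(1 − r/(n+1)) + H_n − H_{n−r}` between the two AURC weight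
estimators satisfies `0 ≤ Q ≤ 1/(n−r)` for `1 ≤ r ≤ n−1`. -/
theorem gap_Q_bounds (n r : ℕ) (hn : 2 ≤ n) (hr1 : 1 ≤ r) (hrn : r ≤ n - 1) :
    0 ≤ Real.log (1 - (r : ℝ) / ((n : ℝ) + 1)) + harmonicR n - harmonicR (n - r)
    ∧ Real.log (1 - (r : ℝ) / ((n : ℝ) + 1)) + harmonicR n - harmonicR (n - r)
        ≤ 1 / ((n - r : ℕ) : ℝ) := by
  set m := n - r with hmdef
  have hrn' : r ≤ n := le_trans hrn (Nat.sub_le n 1)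
  have hm1 : 1 ≤ m := by omega
  have hmn : m ≤ n := Nat.sub_le n r
  have hcast : (m:ℝ) = (n:ℝ) - (r:ℝ) := by
    rw [hmdef]; push_cast [Nat.cast_sub hrn']; ring
  have hn1 : (0:ℝ) < (n:ℝ) + 1 := by positivity
  have hlog : Real.log (1 - (r : ℝ) / ((n : ℝ) + 1))
      = Real.log ((m:ℝ)+1) - Real.log ((n:ℝ)+1) := by
    have h1 : (1:ℝ) - (r : ℝ) / ((n : ℝ) + 1) = ((m:ℝ)+1)/((n:ℝ)+1) := by
      rw [hcast]; field_simp; ring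
    rw [h1, Real.log_div (by positivity) hn1.ne']
  obtain ⟨l, u⟩ := key m hm1 n hmn
  rw [hlog]
  have hmpos : (0:ℝ) < (m:ℝ) := by exact_mod_cast hm1
  refine ⟨l, ?_⟩
  have : (0:ℝ) < 1/((n:ℝ)+1) := by positivity
  linarith
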